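/- For every l ∈ [0,1] and every x ∈ [0,1]: x/2 − x²/3 + l·x/6 ≤ (9/8)·(1/2 − 1/3 + l/6). Equivalently, under a uniform value distribution the expected revenue at signal ratio 1 is at least 8/9 of the maximum expected revenue over all signal ratios x ∈ [0,1]. -/
import Mathlib


/-- Under a uniform value distribution, the expected revenue at signal ratio `1` is at
least `8/9` of the maximum expected revenue over all signal ratios `x ∈ [0,1]`:
`x/2 − x²/3 + l·x/6 ≤ (9/8)·(1/2 − 1/3 + l/6)`. -/
theorem uniform_ratio_one_approx (l x : ℝ) (hl : l ∈ Set.Icc (0 : ℝ) 1)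
    (hx : x ∈ Set.Icc (0 : ℝ) 1) :
    x / 2 - x ^ 2 / 3 + l * x / 6 ≤ (9 / 8) * (1 / 2 - 1 / 3 + l / 6) := by
  obtain ⟨hl0, hl1⟩ := hl
  obtain ⟨hx0, hx1⟩ := hx
  nlinarith [sq_nonneg (x - (3+l)/4), sq_nonneg (1-x), mul_nonneg hl0 hx0, mul_nonneg hl0 (sub_nonneg.2 hx1)]
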